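/- Let X and Y be independent random variables, each exponentially distributed with rate 1, and let R > 0. Then lim_{ρ→∞} ρ² · P(e^{2R} Y ≤ X ≤ e^R(e^R − 1)/ρ) = (e^R − 1)²/2. -/

import Mathlib

open MeasureTheory ProbabilityTheory Filter

section Aux

open Real Set

private lemma integral_exp_neg_mul' (c : ℝ) (hc : 0 < c) (t : ℝ) :
    ∫ x in (0:ℝ)..t, Real.exp (-(c*x)) = (1 - Real.exp (-(c*t)))/c := by
  have h : ∀ x ∈ Set.uIcc (0:ℝ) t,
      HasDerivAt (fun y => -(Real.exp (-(c*y)))/c) (Real.exp (-(c*x))) x := by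
    intro x _
    have := (((hasDerivAt_id x).const_mul (-c)).exp).div_const c
    have h2 : (fun y => -(Real.exp (-(c*y)))/c) = -fun y => Real.exp (-c * id y) / c := by
      funext y; simp [neg_div]
    rw [h2]
    exact this.neg.congr_deriv (by have := hc.ne'; simp only [id, mul_one, neg_mul]; field_simp)
  rw [intervalIntegral.integral_eq_sub_of_hasDerivAt h]
  · field_simp; simp; ring
  · exact ((continuous_exp.comp ((continuous_const.mul continuous_id).neg)).intervalIntegrable 0 t)

private lemma expMeasure_Iic' (z : ℝ) :
    expMeasure 1 (Iic z) = ENNReal.ofReal (if 0 ≤ z then 1 - Real.exp (-z) else 0) := by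
  rw [expMeasure, gammaMeasure, withDensity_apply _ measurableSet_Iic]
  have h : gammaPDF 1 1 = exponentialPDF 1 := rfl
  rw [h]
  have := lintegral_exponentialPDF_eq_antiDeriv one_pos z
  simpa [one_mul] using this

private lemma mA' (a t : ℝ) (ha : 1 ≤ a) (ht : 0 ≤ t) :
    (((expMeasure 1).prod (expMeasure 1))
        {p : ℝ × ℝ | a * p.2 ≤ p.1 ∧ p.1 ≤ t}).toReal
      = (1 - Real.exp (-t)) - (a/(a+1)) * (1 - Real.exp (-((a+1)/a * t))) := by
  have ha0 : 0 < a := lt_of_lt_of_le one_pos ha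
  haveI : IsProbabilityMeasure (expMeasure 1) := isProbabilityMeasure_expMeasure one_pos
  set S : Set (ℝ × ℝ) := {p : ℝ × ℝ | a * p.2 ≤ p.1 ∧ p.1 ≤ t} with hSdef
  have hS : MeasurableSet S := by
    apply MeasurableSet.inter
    · exact measurableSet_le (measurable_const.mul measurable_snd) measurable_fst
    · exact measurableSet_le measurable_fst measurable_const
  rw [Measure.prod_apply hS]
  have hslice : ∀ x : ℝ, expMeasure 1 (Prod.mk x ⁻¹' S)
      = Set.indicator (Icc 0 t) (fun x => ENNReal.ofReal (1 - Real.exp (-(x/a)))) x := by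
    intro x
    by_cases hxt : x ≤ t
    · have hpre : Prod.mk x ⁻¹' S = Iic (x/a) := by
        ext y
        simp only [hSdef, mem_preimage, mem_setOf_eq, mem_Iic, hxt, and_true]
        rw [le_div_iff₀ ha0, mul_comm]
      rw [hpre, expMeasure_Iic']
      by_cases hx0 : 0 ≤ x
      · rw [if_pos (div_nonneg hx0 ha0.le), Set.indicator_of_mem (Set.mem_Icc.mpr ⟨hx0, hxt⟩)]
      · rw [if_neg (by rw [not_le]; exact div_neg_of_neg_of_pos (not_le.mp hx0) ha0),
          Set.indicator_of_notMem (by simp [hx0])]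
        exact ENNReal.ofReal_zero
    · have hpre : Prod.mk x ⁻¹' S = ∅ := by
        ext y; simp [hSdef, hxt]
      rw [hpre, Set.indicator_of_notMem (by simp only [mem_Icc, not_and]; exact fun _ => hxt)]
      simp
  rw [lintegral_congr hslice, lintegral_indicator measurableSet_Icc _]
  have hrw : ∫⁻ x in Icc 0 t, ENNReal.ofReal (1 - Real.exp (-(x/a))) ∂(expMeasure 1)
      = ∫⁻ x in Icc 0 t, ENNReal.ofReal (Real.exp (-x) * (1 - Real.exp (-(x/a)))) := by
    have hm : Measurable (gammaPDF 1 1) := (measurable_gammaPDFReal 1 1).ennreal_ofReal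
    have hg : Measurable fun x : ℝ => ENNReal.ofReal (1 - Real.exp (-(x/a))) :=
      Measurable.ennreal_ofReal (by fun_prop)
    rw [expMeasure, gammaMeasure, restrict_withDensity measurableSet_Icc,
      lintegral_withDensity_eq_lintegral_mul _ hm hg]
    apply setLIntegral_congr_fun measurableSet_Icc
    intro x hx
    simp only [Pi.mul_apply]
    have h1 : (gammaPDF 1 1) x = ENNReal.ofReal (Real.exp (-x)) := by
      have h : gammaPDF 1 1 = exponentialPDF 1 := rfl
      rw [h, exponentialPDF_of_nonneg hx.1]
      norm_num
    rw [h1, ← ENNReal.ofReal_mul (exp_nonneg _)]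
  rw [hrw]
  have hnn : ∀ x ∈ Icc (0:ℝ) t, 0 ≤ Real.exp (-x) * (1 - Real.exp (-(x/a))) := by
    intro x hx
    apply mul_nonneg (exp_nonneg _)
    rw [sub_nonneg]
    exact Real.exp_le_one_iff.mpr (neg_nonpos.mpr (div_nonneg hx.1 ha0.le))
  have hcont : Continuous (fun x : ℝ => Real.exp (-x) * (1 - Real.exp (-(x/a)))) := by
    fun_prop
  rw [← ofReal_integral_eq_lintegral_ofReal hcont.integrableOn_Icc
      (ae_restrict_of_forall_mem measurableSet_Icc hnn),
    ENNReal.toReal_ofReal (setIntegral_nonneg measurableSet_Icc hnn)]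
  rw [integral_Icc_eq_integral_Ioc, ← intervalIntegral.integral_of_le ht]
  have hfi : ∀ x ∈ Set.uIcc (0:ℝ) t, Real.exp (-x) * (1 - Real.exp (-(x/a)))
      = Real.exp (-(1*x)) - Real.exp (-((a+1)/a*x)) := by
    intro x _
    rw [mul_sub, mul_one, ← Real.exp_add, one_mul]
    congr 2
    field_simp
    ring
  rw [intervalIntegral.integral_congr hfi,
    intervalIntegral.integral_sub
      ((by fun_prop : Continuous fun x : ℝ => Real.exp (-(1*x))).intervalIntegrable 0 t)
      ((by fun_prop : Continuous fun x : ℝ => Real.exp (-((a+1)/a*x))).intervalIntegrable 0 t),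
    integral_exp_neg_mul' 1 one_pos, integral_exp_neg_mul' _ (by positivity)]
  rw [one_mul, div_one]
  have h2 : ∀ u : ℝ, u/((a+1)/a) = a/(a+1)*u := fun u => by
    field_simp
  rw [h2]

private lemma expTaylor' (x : ℝ) (hx : |x| ≤ 1) :
    |Real.exp x - (1 + x + x^2/2)| ≤ |x|^3 * (2/9) := by
  have := Real.exp_bound hx (n := 3) (by norm_num)
  simp [Finset.sum_range_succ] at this
  convert this using 2
  norm_num [Nat.factorial]

private lemma gBound' (a t : ℝ) (ha : 1 ≤ a) (ht0 : 0 ≤ t) (ht : t ≤ 1/2) :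
    |((1 - Real.exp (-t)) - a/(a+1) * (1 - Real.exp (-((a+1)/a * t)))) - t^2/(2*a)|
      ≤ 2*t^3 := by
  have ha0 : 0 < a := lt_of_lt_of_le one_pos ha
  have ha1 : (0:ℝ) < a + 1 := by linarith
  set b : ℝ := (a+1)/a with hb
  have hb1 : 1 ≤ b := by rw [hb, le_div_iff₀ ha0]; linarith
  have hb2 : b ≤ 2 := by rw [hb, div_le_iff₀ ha0]; linarith
  have hb0 : 0 < b := lt_of_lt_of_le one_pos hb1
  set e1 : ℝ := Real.exp (-t) - (1 + (-t) + (-t)^2/2) with he1d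
  set e2 : ℝ := Real.exp (-(b*t)) - (1 + (-(b*t)) + (-(b*t))^2/2) with he2d
  have he1 : |e1| ≤ t^3 * (2/9) := by
    have h := expTaylor' (-t) (by rw [abs_neg, abs_of_nonneg ht0]; linarith)
    rwa [abs_neg, abs_of_nonneg ht0] at h
  have he2 : |e2| ≤ (b*t)^3 * (2/9) := by
    have hbt : 0 ≤ b*t := mul_nonneg hb0.le ht0
    have h := expTaylor' (-(b*t)) (by rw [abs_neg, abs_of_nonneg hbt]; nlinarith)
    rwa [abs_neg, abs_of_nonneg hbt] at h
  have hid : ((1 - Real.exp (-t)) - a/(a+1) * (1 - Real.exp (-(b * t)))) - t^2/(2*a)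
      = -e1 + (a/(a+1)) * e2 := by
    rw [he1d, he2d, hb]
    field_simp
    ring
  rw [hid]
  have hq0 : 0 ≤ a/(a+1) := by positivity
  have hq1 : a/(a+1) ≤ 1 := by rw [div_le_one ha1]; linarith
  calc |-e1 + (a/(a+1)) * e2| ≤ |e1| + (a/(a+1)) * |e2| := by
        refine (abs_add_le _ _).trans ?_
        rw [abs_neg, abs_mul, abs_of_nonneg hq0]
    _ ≤ t^3 * (2/9) + 1 * ((b*t)^3 * (2/9)) := by
        refine add_le_add he1 ?_
        exact mul_le_mul hq1 he2 (abs_nonneg _) one_pos.le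
    _ ≤ 2*t^3 := by
        nlinarith [pow_le_pow_left₀ (mul_nonneg hb0.le ht0) (by nlinarith : b*t ≤ 2*t) 3,
          pow_nonneg ht0 3]

private lemma keyB' (a c : ℝ) (ha : 1 ≤ a) (hc : 0 < c) :
    Tendsto (fun ρ : ℝ => ρ^2 *
        ((1 - Real.exp (-(c/ρ))) - a/(a+1) * (1 - Real.exp (-((a+1)/a * (c/ρ))))))
      atTop (nhds (c^2/(2*a))) := by
  have ha0 : 0 < a := lt_of_lt_of_le one_pos ha
  have h0 : Tendsto (fun ρ : ℝ => ρ^2 *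
      ((1 - Real.exp (-(c/ρ))) - a/(a+1) * (1 - Real.exp (-((a+1)/a * (c/ρ)))))
      - c^2/(2*a)) atTop (nhds 0) := by
    apply squeeze_zero_norm' (a := fun ρ : ℝ => 2*c^3/ρ)
    · filter_upwards [eventually_ge_atTop (max (2*c) 1)] with ρ hρ
      have hρ1 : (1:ℝ) ≤ ρ := le_trans (le_max_right _ _) hρ
      have hρc : 2*c ≤ ρ := le_trans (le_max_left _ _) hρ
      have hρ0 : (0:ℝ) < ρ := lt_of_lt_of_le one_pos hρ1
      have ht0 : 0 ≤ c/ρ := by positivity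
      have ht : c/ρ ≤ 1/2 := by rw [div_le_iff₀ hρ0]; linarith
      have hB := gBound' a (c/ρ) ha ht0 ht
      have hkey : ρ^2 * ((1 - Real.exp (-(c/ρ))) - a/(a+1) * (1 - Real.exp (-((a+1)/a * (c/ρ)))))
          - c^2/(2*a)
          = ρ^2 * (((1 - Real.exp (-(c/ρ))) - a/(a+1) * (1 - Real.exp (-((a+1)/a * (c/ρ)))))
            - (c/ρ)^2/(2*a)) := by
        field_simp
      rw [Real.norm_eq_abs, hkey, abs_mul, abs_of_nonneg (by positivity : (0:ℝ) ≤ ρ^2)]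
      calc ρ^2 * |_| ≤ ρ^2 * (2*(c/ρ)^3) :=
            mul_le_mul_of_nonneg_left hB (by positivity)
        _ = 2*c^3/ρ := by field_simp
    · exact Tendsto.div_atTop tendsto_const_nhds tendsto_id
  have h1 := h0.add_const (c^2/(2*a))
  simpa using h1

end Aux

/-- High-SNR behavior of the pure-NOMA power outage probability: if `X = h_{2,1}` and
`Y = h_{2,2}` are i.i.d. rate-1 exponential channel gains, then
`ρ² · P(e^{2R} Y ≤ X ≤ e^R(e^R - 1)/ρ) → (e^R - 1)²/2` as `ρ → ∞`. -/
theorem stmt_9 {Ω : Type*} [MeasurableSpace Ω] (μ : Measure Ω) [IsProbabilityMeasure μ]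
    (X Y : Ω → ℝ) (hX : Measurable X) (hY : Measurable Y) (hXY : IndepFun X Y μ)
    (hXd : μ.map X = expMeasure 1) (hYd : μ.map Y = expMeasure 1)
    (R : ℝ) (hR : 0 < R) :
    Tendsto (fun ρ : ℝ => ρ ^ 2 *
        (μ {ω | Real.exp (2 * R) * Y ω ≤ X ω ∧
                X ω ≤ Real.exp R * (Real.exp R - 1) / ρ}).toReal)
      atTop (nhds ((Real.exp R - 1) ^ 2 / 2)) := by
  set a : ℝ := Real.exp (2 * R) with hadef
  set c : ℝ := Real.exp R * (Real.exp R - 1) with hcdef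
  have ha : 1 ≤ a := Real.one_le_exp (by positivity)
  have hc : 0 < c := by
    apply mul_pos (Real.exp_pos R)
    have : (1:ℝ) < Real.exp R := by
      calc (1:ℝ) = Real.exp 0 := (Real.exp_zero).symm
        _ < Real.exp R := Real.exp_lt_exp.mpr hR
    linarith
  have hmap : μ.map (fun ω => (X ω, Y ω)) = (expMeasure 1).prod (expMeasure 1) := by
    rw [(indepFun_iff_map_prod_eq_prod_map_map hX.aemeasurable hY.aemeasurable).mp hXY,
      hXd, hYd]
  have hL : (Real.exp R - 1) ^ 2 / 2 = c^2/(2*a) := by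
    have h2 : a = Real.exp R ^ 2 := by rw [hadef, two_mul, Real.exp_add, sq]
    rw [hcdef, h2]
    have := Real.exp_ne_zero R
    field_simp
  rw [hL]
  apply Tendsto.congr' _ (keyB' a c ha hc)
  filter_upwards [eventually_gt_atTop (0:ℝ)] with ρ hρ
  have ht : 0 ≤ c/ρ := by positivity
  have hS : MeasurableSet {p : ℝ × ℝ | a * p.2 ≤ p.1 ∧ p.1 ≤ c/ρ} := by
    apply MeasurableSet.inter
    · exact measurableSet_le (measurable_const.mul measurable_snd) measurable_fst
    · exact measurableSet_le measurable_fst measurable_const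
  have hev : μ {ω | a * Y ω ≤ X ω ∧ X ω ≤ c / ρ}
      = ((expMeasure 1).prod (expMeasure 1)) {p : ℝ × ℝ | a * p.2 ≤ p.1 ∧ p.1 ≤ c/ρ} := by
    rw [← hmap, Measure.map_apply (hX.prodMk hY) hS]
    rfl
  rw [hev, mA' a (c/ρ) ha ht]
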